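/- Let w, w′ ∈ Sₙ with w <ₖ w′ in the k-Bruhat order, and let p be an integer with p > k and w(p) = w′(p). Then ℓ(w′|ₚ) − ℓ(w|ₚ) = ℓ(w′) − ℓ(w), and w|ₚ <ₖ w′|ₚ in the k-Bruhat order on Sₙ₋₁. -/

import Mathlib

open Equiv MvPolynomial

attribute [local instance] Classical.propDecidable

namespace SchubertPieri

/-- Position `j ∈ {1,…,N}` (1-indexed) as an element of `Fin N` (0-indexed). -/
def pos (N : ℕ) [NeZero N] (j : ℕ) : Fin N :=
  ⟨(j - 1) % N, Nat.mod_lt _ (Nat.pos_of_ne_zero (NeZero.ne N))⟩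

/-- The transposition `t_{a,b}` interchanging positions `a` and `b` (1-indexed). -/
def t (N : ℕ) [NeZero N] (a b : ℕ) : Equiv.Perm (Fin N) :=
  Equiv.swap (pos N a) (pos N b)

/-- The value `w(j)` for `j ∈ {1,…,N}` (1-indexed). -/
def val {N : ℕ} [NeZero N] (w : Equiv.Perm (Fin N)) (j : ℕ) : ℕ :=
  (w (pos N j) : ℕ) + 1

/-- The length of `w`: its number of inversions. -/
def len {N : ℕ} (w : Equiv.Perm (Fin N)) : ℕ :=
  (Finset.univ.filter fun p : Fin N × Fin N => p.1 < p.2 ∧ w p.2 < w p.1).card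

/-- The longest permutation `w₀ : j ↦ N+1-j`. -/
def w0 (N : ℕ) : Equiv.Perm (Fin N) :=
  ⟨Fin.rev, Fin.rev, Fin.rev_rev, Fin.rev_rev⟩

/-- The product `t_{a 0, b 0} ⋯ t_{a (i-1), b (i-1)}`. -/
def tProd (N : ℕ) [NeZero N] (a b : ℕ → ℕ) (i : ℕ) : Equiv.Perm (Fin N) :=
  ((List.range i).map fun j => t N (a j) (b j)).prod

/-- `r[k,m] = t_{k,k+1} t_{k,k+2} ⋯ t_{k,k+m}`, the (m+1)-cycle with
`r[k,m](k) = k+m` and `r[k,m](j) = j-1` for `k+1 ≤ j ≤ k+m`. -/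
def rPerm (N k m : ℕ) [NeZero N] : Equiv.Perm (Fin N) :=
  ((List.range m).map fun i => t N k (k + 1 + i)).prod

/-- `c[k,m] = t_{k,k+1} t_{k-1,k+1} ⋯ t_{k-m+1,k+1}`, the (m+1)-cycle with
`c[k,m](j) = j+1` for `k-m+1 ≤ j ≤ k` and `c[k,m](k+1) = k-m+1`. -/
def cPerm (N k m : ℕ) [NeZero N] : Equiv.Perm (Fin N) :=
  ((List.range m).map fun i => t N (k - i) (k + 1)).prod

/-- The conditions that `aᵢ ≤ k < bᵢ` (with all indices in `{1,…,N}`) and that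
`ℓ(w t_{a₁ b₁} ⋯ t_{aᵢ bᵢ}) = ℓ(w) + i` for `1 ≤ i ≤ m`. -/
def StepOK (N k m : ℕ) [NeZero N] (w : Equiv.Perm (Fin N)) (a b : ℕ → ℕ) : Prop :=
  (∀ i, i < m → 1 ≤ a i ∧ a i ≤ k ∧ k < b i ∧ b i ≤ N) ∧
  (∀ i, i ≤ m → len (w * tProd N a b i) = len w + i)

/-- `w →_{r[k,m]} w'`. -/
def RelR (N k m : ℕ) [NeZero N] (w w' : Equiv.Perm (Fin N)) : Prop :=
  ∃ a b : ℕ → ℕ, StepOK N k m w a b ∧ w' = w * tProd N a b m ∧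
    (∀ i j, i < m → j < m → i ≠ j → b i ≠ b j)

/-- `w →_{c[k,m]} w'`. -/
def RelC (N k m : ℕ) [NeZero N] (w w' : Equiv.Perm (Fin N)) : Prop :=
  ∃ a b : ℕ → ℕ, StepOK N k m w a b ∧ w' = w * tProd N a b m ∧
    (∀ i j, i < m → j < m → i ≠ j → a i ≠ a j)

/-- The divided difference operator `∂ᵢ f = (f - sᵢ·f)/(xᵢ - xᵢ₊₁)` (1-indexed `i`);
the quotient is exact, and is recovered here as the (unique) witness of divisibility. -/
noncomputable def divDiff {N : ℕ} [NeZero N] (i : ℕ) (f : MvPolynomial (Fin N) ℤ) :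
    MvPolynomial (Fin N) ℤ :=
  if h : (X (pos N i) - X (pos N (i + 1))) ∣ (f - rename (⇑(t N i (i + 1))) f) then
    h.choose
  else 0

/-- `∂_{a₁} ∘ ⋯ ∘ ∂_{a_p}` applied to `f`, for a word `l = [a₁,…,a_p]`. -/
noncomputable def divDiffWord {N : ℕ} [NeZero N] (l : List ℕ) (f : MvPolynomial (Fin N) ℤ) :
    MvPolynomial (Fin N) ℤ :=
  l.foldr divDiff f

/-- Auxiliary: produce a reduced word for `w` by repeatedly removing a descent. -/
def redWordAux (N : ℕ) [NeZero N] : ℕ → Equiv.Perm (Fin N) → List ℕ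
  | 0, _ => []
  | fuel + 1, w =>
    match ((List.range (N - 1)).map (· + 1)).find? (fun i => decide (val w (i + 1) < val w i)) with
    | none => []
    | some i => redWordAux N fuel (w * t N i (i + 1)) ++ [i]

/-- A canonical reduced word `(a₁,…,a_p)` for `w`, i.e. `w = s_{a₁} ⋯ s_{a_p}` with `p = ℓ(w)`. -/
def redWord (N : ℕ) [NeZero N] (w : Equiv.Perm (Fin N)) : List ℕ :=
  redWordAux N (N * N) w

/-- The staircase monomial `x₁^{N-1} x₂^{N-2} ⋯ x_{N-1}`. -/
noncomputable def staircase (N : ℕ) : MvPolynomial (Fin N) ℤ :=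
  ∏ i : Fin N, X i ^ (N - 1 - (i : ℕ))

/-- The Schubert polynomial `𝔖_w = ∂_{w⁻¹w₀}(x₁^{N-1} ⋯ x_{N-1})`. -/
noncomputable def schubertPoly (N : ℕ) [NeZero N] (w : Equiv.Perm (Fin N)) :
    MvPolynomial (Fin N) ℤ :=
  divDiffWord (redWord N (w⁻¹ * w0 N)) (staircase N)

/-- The ideal of `Rₙ` generated by the symmetric polynomials with zero constant term. -/
noncomputable def symIdeal (N : ℕ) : Ideal (MvPolynomial (Fin N) ℤ) :=
  Ideal.span {f : MvPolynomial (Fin N) ℤ | f.IsSymmetric ∧ constantCoeff f = 0}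

/-- The ring `Hₙ = Rₙ/𝒮`. -/
abbrev HRing (N : ℕ) := MvPolynomial (Fin N) ℤ ⧸ symIdeal N

/-- The class of the Schubert polynomial `𝔖_w` in `Hₙ`. -/
noncomputable def SS (N : ℕ) [NeZero N] (w : Equiv.Perm (Fin N)) : HRing N :=
  Ideal.Quotient.mk (symIdeal N) (schubertPoly N w)

/-- The complete homogeneous symmetric polynomial of degree `m` in `x₁,…,x_k`. -/
noncomputable def hPoly (N k m : ℕ) : MvPolynomial (Fin N) ℤ :=
  ∑ s ∈ (Finset.univ.filter fun i : Fin N => (i : ℕ) < k).sym m,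
    (Multiset.map X (s : Multiset (Fin N))).prod

/-- The elementary symmetric polynomial of degree `m` in `x₁,…,x_k`. -/
noncomputable def ePoly (N k m : ℕ) : MvPolynomial (Fin N) ℤ :=
  ∑ s ∈ (Finset.univ.filter fun i : Fin N => (i : ℕ) < k).powersetCard m, ∏ i ∈ s, X i

/-- Covering relation of the `k`-Bruhat order. -/
def kCover (N k : ℕ) [NeZero N] (w w' : Equiv.Perm (Fin N)) : Prop :=
  ∃ a b : ℕ, 1 ≤ a ∧ a ≤ k ∧ k < b ∧ b ≤ N ∧ w' = w * t N a b ∧ len w' = len w + 1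

/-- The (strict) `k`-Bruhat order `<ₖ`. -/
def kBruhat (N k : ℕ) [NeZero N] : Equiv.Perm (Fin N) → Equiv.Perm (Fin N) → Prop :=
  Relation.TransGen (kCover N k)

/-- The label `w⁽ⁱ⁺¹⁾(a_{i+1})` (0-indexed `i`) of the `(i+1)`-st step of a path. -/
def label {N : ℕ} [NeZero N] (w : Equiv.Perm (Fin N)) (a b : ℕ → ℕ) (i : ℕ) : ℕ :=
  val (w * tProd N a b (i + 1)) (a i)

/-- `(a,b)` encodes a path of length `m` in the `k`-Bruhat order from `w` to `w'`
(normalized so that `a i = b i = 0` for `i ≥ m`, making the encoding unique). -/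
def PathWit (N k m : ℕ) [NeZero N] (w w' : Equiv.Perm (Fin N))
    (ab : (ℕ → ℕ) × (ℕ → ℕ)) : Prop :=
  StepOK N k m w ab.1 ab.2 ∧ w' = w * tProd N ab.1 ab.2 m ∧
    ∀ i, m ≤ i → ab.1 i = 0 ∧ ab.2 i = 0

/-- Paths of length `m` in the `k`-Bruhat order from `w` to `w'` with strictly
increasing labels. -/
def IncPaths (N k m : ℕ) [NeZero N] (w w' : Equiv.Perm (Fin N)) :
    Set ((ℕ → ℕ) × (ℕ → ℕ)) :=
  {ab | PathWit N k m w w' ab ∧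
    ∀ i j, i < j → j < m → label w ab.1 ab.2 i < label w ab.1 ab.2 j}

/-- Paths of length `m` in the `k`-Bruhat order from `w` to `w'` with strictly
decreasing labels. -/
def DecPaths (N k m : ℕ) [NeZero N] (w w' : Equiv.Perm (Fin N)) :
    Set ((ℕ → ℕ) × (ℕ → ℕ)) :=
  {ab | PathWit N k m w w' ab ∧
    ∀ i j, i < j → j < m → label w ab.1 ab.2 j < label w ab.1 ab.2 i}


/-- The cycle `(x₁ x₂ … x_r)` (sending `x₁ ↦ x₂ ↦ ⋯ ↦ x_r ↦ x₁`), as a product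
of transpositions. -/
def cycleList (N : ℕ) [NeZero N] (l : List ℕ) : Equiv.Perm (Fin N) :=
  ((l.zip l.tail).map fun p => t N p.1 p.2).prod

/-- The Grassmannian permutation `h[k;p,q]` of descent `k` and hook shape `(p,1^{q-1})`:
the `(p+q)`-cycle `(k-q+1  k-q+2 … k  k+p  k+p-1 … k+1)`. -/
def hookPerm (N k p q : ℕ) [NeZero N] : Equiv.Perm (Fin N) :=
  cycleList N (((List.range q).map fun i => k - q + 1 + i) ++
    ((List.range p).reverse.map fun i => k + 1 + i))

/-- `w|ₚ ∈ S_{N-1}`: delete row `p` and column `w(p)` from the permutation matrix of `w`. -/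
def drop {N : ℕ} (w : Equiv.Perm (Fin (N + 1))) (p : Fin (N + 1)) : Equiv.Perm (Fin N) :=
  Equiv.removeNone (((finSuccEquiv' p).symm.trans (w : Fin (N + 1) ≃ Fin (N + 1))).trans
    (finSuccEquiv' (w p)))

/-- `lam` is a partition with at most `k` parts (1-indexed parts `lam 1 ≥ lam 2 ≥ ⋯`,
normalized by `lam 0 = 0`). -/
def IsPartFun (k : ℕ) (lam : ℕ → ℕ) : Prop :=
  lam 0 = 0 ∧ (∀ j, 1 ≤ j → lam (j + 1) ≤ lam j) ∧ ∀ j, k < j → lam j = 0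

/-- `h_d(x₁,…,x_k)` for an integer `d`, with `h_d = 0` for `d < 0`. -/
noncomputable def hPolyZ (N k : ℕ) (d : ℤ) : MvPolynomial (Fin N) ℤ :=
  if 0 ≤ d then hPoly N k d.toNat else 0

/-- The Schur polynomial `s_λ(x₁,…,x_k)`, via the Jacobi–Trudi determinant
`det(h_{λᵢ+j-i})_{1 ≤ i,j ≤ k}`. -/
noncomputable def schurPoly (N k : ℕ) (lam : ℕ → ℕ) : MvPolynomial (Fin N) ℤ :=
  (Matrix.of fun i j : Fin k =>
    hPolyZ N k ((lam ((i : ℕ) + 1) : ℤ) + (j : ℕ) - (i : ℕ))).det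

/-- `r_j = #{i : aᵢ = j}` (with `i` ranging over `0,…,m-1`, 0-indexed). -/
def rJ (a : ℕ → ℕ) (m j : ℕ) : ℕ := ((Finset.range m).filter fun i => a i = j).card

/-- `μ_j = r_{j+1} + ⋯ + r_k`. -/
def muJ (a : ℕ → ℕ) (m k j : ℕ) : ℕ :=
  if j = 0 then 0 else ∑ j' ∈ Finset.Icc (j + 1) k, rJ a m j'

/-- `λ_j = μ_j + r_j`. -/
def lamJ (a : ℕ → ℕ) (m k j : ℕ) : ℕ :=
  if j = 0 then 0 else muJ a m k j + rJ a m j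

/-- `d_j = #{i : bᵢ = N+1-j}` (with `i` ranging over `0,…,m-1`, 0-indexed). -/
def dJ (b : ℕ → ℕ) (m N j : ℕ) : ℕ :=
  ((Finset.range m).filter fun i => b i = N + 1 - j).card

/-- `μ′_j = d_{j+1} + ⋯ + d_{N-k}`. -/
def muJ' (b : ℕ → ℕ) (m N k j : ℕ) : ℕ :=
  if j = 0 then 0 else ∑ j' ∈ Finset.Icc (j + 1) (N - k), dJ b m N j'

/-- `λ′_j = μ′_j + d_j`. -/
def lamJ' (b : ℕ → ℕ) (m N k j : ℕ) : ℕ :=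
  if j = 0 then 0 else muJ' b m N k j + dJ b m N j

/-- The conjugate (transpose) partition: `νᵗ_j = #{i : νᵢ ≥ j}`, for `ν` with at
most `k` parts. -/
def conjPart (k : ℕ) (nu : ℕ → ℕ) (j : ℕ) : ℕ :=
  if j = 0 then 0 else ((Finset.Icc 1 k).filter fun i => j ≤ nu i).card

/-- `wv` is the Grassmannian permutation of descent `k` and shape `nu`:
`wv(j) = j + ν_{k+1-j}` for `1 ≤ j ≤ k`, and `wv` is increasing on `{k+1,…,N}`. -/
def IsGrassOf (N k : ℕ) [NeZero N] (nu : ℕ → ℕ) (wv : Equiv.Perm (Fin N)) : Prop :=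
  (∀ j, 1 ≤ j → j ≤ k → val wv j = j + nu (k + 1 - j)) ∧
  (∀ j, k < j → j < N → val wv j < val wv (j + 1))

/-- Paths of length `m` in the `k`-Bruhat order from `w` to `w'` whose labels
increase strictly for the first `p` steps and decrease strictly thereafter
(positions `p, p+1, …, m` being decreasing, 1-indexed). -/
def IncDecPaths (N k m p : ℕ) [NeZero N] (w w' : Equiv.Perm (Fin N)) :
    Set ((ℕ → ℕ) × (ℕ → ℕ)) :=
  {ab | PathWit N k m w w' ab ∧
    (∀ i j, i < j → j < p → label w ab.1 ab.2 i < label w ab.1 ab.2 j) ∧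
    (∀ i j, p - 1 ≤ i → i < j → j < m → label w ab.1 ab.2 j < label w ab.1 ab.2 i)}

/-- Paths of length `m` in the `k`-Bruhat order from `w` to `w'` whose labels
decrease strictly for the first `q` steps and increase strictly thereafter. -/
def DecIncPaths (N k m q : ℕ) [NeZero N] (w w' : Equiv.Perm (Fin N)) :
    Set ((ℕ → ℕ) × (ℕ → ℕ)) :=
  {ab | PathWit N k m w w' ab ∧
    (∀ i j, i < j → j < q → label w ab.1 ab.2 j < label w ab.1 ab.2 i) ∧
    (∀ i j, q - 1 ≤ i → i < j → j < m → label w ab.1 ab.2 i < label w ab.1 ab.2 j)}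


-- ==================== AUX ====================

noncomputable def invSet {N : ℕ} (u : Equiv.Perm (Fin N)) : Finset (Fin N × Fin N) :=
  Finset.univ.filter fun p : Fin N × Fin N => p.1 < p.2 ∧ u p.2 < u p.1

lemma len_eq_card {N : ℕ} (u : Equiv.Perm (Fin N)) : len u = (invSet u).card := rfl

lemma mem_invSet {N : ℕ} {u : Equiv.Perm (Fin N)} {q : Fin N × Fin N} :
    q ∈ invSet u ↔ q.1 < q.2 ∧ u q.2 < u q.1 := by
  simp [invSet]

lemma succAbove_drop {N : ℕ} (w : Equiv.Perm (Fin (N + 1))) (P : Fin (N + 1)) (j : Fin N) :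
    (w P).succAbove (drop w P j) = w (P.succAbove j) := by
  have hne : w (P.succAbove j) ≠ w P := w.injective.ne (P.succAbove_ne j)
  obtain ⟨i, hi⟩ := Fin.exists_succAbove_eq hne
  have he : (((finSuccEquiv' P).symm.trans (w : Fin (N + 1) ≃ Fin (N + 1))).trans
      (finSuccEquiv' (w P))) (some j) = some i := by
    simp only [Equiv.trans_apply, finSuccEquiv'_symm_some]
    rw [← hi, finSuccEquiv'_succAbove]
  have := Equiv.removeNone_some _ ⟨i, he⟩
  rw [he] at this
  have : drop w P j = i := Option.some_injective _ this
  rw [this, hi]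



/-- Characterization of inversions lost when multiplying by a swap with `u A < u B`. -/
lemma dm_char {N : ℕ} {u : Equiv.Perm (Fin N)} {A B : Fin N} (hAB : A < B)
    (hu : u A < u B) {q : Fin N × Fin N}
    (hq : q ∈ invSet u \ invSet (u * Equiv.swap A B)) :
    (q.2 = A ∧ q.1 < A ∧ u A < u q.1 ∧ u q.1 < u B) ∨
    (q.1 = B ∧ B < q.2 ∧ u A < u q.2 ∧ u q.2 < u B) := by
  rw [Finset.mem_sdiff, mem_invSet, mem_invSet] at hq
  obtain ⟨⟨h12, hval⟩, hnot⟩ := hq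
  have hne : (u * Equiv.swap A B) q.1 ≠ (u * Equiv.swap A B) q.2 :=
    (Equiv.injective _).ne (ne_of_lt h12)
  have hval' : (u * Equiv.swap A B) q.1 < (u * Equiv.swap A B) q.2 := by
    rcases lt_or_gt_of_ne hne with h | h
    · exact h
    · exact absurd ⟨h12, h⟩ hnot
  simp only [Equiv.Perm.mul_apply] at hval'
  by_cases h1A : q.1 = A
  · by_cases h2B : q.2 = B
    · rw [h1A, h2B] at hval; exact absurd hu (not_lt_of_gt hval)
    · have h2A : q.2 ≠ A := fun h => (ne_of_lt h12) (h1A.trans h.symm)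
      rw [h1A, Equiv.swap_apply_left, Equiv.swap_apply_of_ne_of_ne h2A h2B] at hval'
      rw [h1A] at hval
      exact absurd ((hval.trans hu).trans hval') (lt_irrefl _)
  · by_cases h1B : q.1 = B
    · right
      have h2A : q.2 ≠ A := by
        rintro rfl
        exact absurd (hAB.trans (h1B ▸ h12)) (lt_irrefl _)
      have h2B : q.2 ≠ B := fun h => (ne_of_lt h12) (h1B.trans h.symm)
      rw [h1B, Equiv.swap_apply_right, Equiv.swap_apply_of_ne_of_ne h2A h2B] at hval'
      rw [h1B] at hval h12
      exact ⟨h1B, h12, hval', hval⟩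
    · by_cases h2A : q.2 = A
      · left
        rw [h2A] at hval ⊢
        rw [Equiv.swap_apply_of_ne_of_ne h1A h1B, h2A, Equiv.swap_apply_left] at hval'
        exact ⟨rfl, (h2A ▸ h12), hval, hval'⟩
      · by_cases h2B : q.2 = B
        · rw [h2B] at hval
          rw [Equiv.swap_apply_of_ne_of_ne h1A h1B, h2B, Equiv.swap_apply_right] at hval'
          exact absurd (hu.trans hval) (not_lt_of_gt hval')
        · rw [Equiv.swap_apply_of_ne_of_ne h1A h1B,
            Equiv.swap_apply_of_ne_of_ne h2A h2B] at hval'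
          exact absurd hval (not_lt_of_gt hval')



lemma card_bound {N : ℕ} (u : Equiv.Perm (Fin N)) {A B : Fin N} (hAB : A < B)
    (hu : u A < u B) (S : Finset (Fin N × Fin N))
    (hS : ∀ q ∈ S, q ∈ invSet (u * Equiv.swap A B) \ invSet u)
    (hS1 : ∀ q ∈ S, ¬(q.1 < A ∧ q.2 = B))
    (hS2 : ∀ q ∈ S, ¬(q.1 = A ∧ B < q.2)) :
    len u + S.card ≤ len (u * Equiv.swap A B) := by
  set u' := u * Equiv.swap A B with hu'
  set Dm := invSet u \ invSet u' with hDm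
  set Dp := invSet u' \ invSet u with hDp
  have fact1 : (invSet u').card + Dm.card = (invSet u).card + Dp.card := by
    rw [hDm, hDp, ← Finset.card_union_of_disjoint Finset.disjoint_sdiff,
        ← Finset.card_union_of_disjoint Finset.disjoint_sdiff,
        Finset.union_sdiff_self_eq_union, Finset.union_sdiff_self_eq_union,
        Finset.union_comm]
  have hSsub : S ⊆ Dp := fun q hq => hS q hq
  have hinj : Dm.card ≤ (Dp \ S).card := by
    apply Finset.card_le_card_of_injOn (fun q => if q.2 = A then (q.1, B) else (A, q.2))
    · intro q hq
      rcases dm_char hAB hu hq with ⟨h2, h1A, hx1, hx2⟩ | ⟨h1, hB2, hx1, hx2⟩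
      · have hq1A : q.1 ≠ A := ne_of_lt h1A
        have hq1B : q.1 ≠ B := ne_of_lt (h1A.trans hAB)
        have hvB : u' B = u A := by simp [hu', Equiv.Perm.mul_apply]
        have hvq : u' q.1 = u q.1 := by
          simp [hu', Equiv.Perm.mul_apply, Equiv.swap_apply_of_ne_of_ne hq1A hq1B]
        simp only [Finset.mem_coe]
        rw [if_pos h2, Finset.mem_sdiff, Finset.mem_sdiff, mem_invSet, mem_invSet]
        refine ⟨⟨⟨h1A.trans hAB, ?_⟩, ?_⟩, ?_⟩
        · show u' B < u' q.1
          rw [hvB, hvq]; exact hx1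
        · rintro ⟨-, h⟩; exact absurd hx2 (not_lt_of_gt h)
        · intro hmem; exact hS1 _ hmem ⟨h1A, rfl⟩
      · have hq2A : q.2 ≠ A := ne_of_gt (hAB.trans hB2)
        have hq2B : q.2 ≠ B := ne_of_gt hB2
        have hvA : u' A = u B := by simp [hu', Equiv.Perm.mul_apply]
        have hvq : u' q.2 = u q.2 := by
          simp [hu', Equiv.Perm.mul_apply, Equiv.swap_apply_of_ne_of_ne hq2A hq2B]
        simp only [Finset.mem_coe]
        rw [if_neg hq2A, Finset.mem_sdiff, Finset.mem_sdiff, mem_invSet, mem_invSet]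
        refine ⟨⟨⟨hAB.trans hB2, ?_⟩, ?_⟩, ?_⟩
        · show u' q.2 < u' A
          rw [hvA, hvq]; exact hx2
        · rintro ⟨-, h⟩; exact absurd hx1 (not_lt_of_gt h)
        · intro hmem; exact hS2 _ hmem ⟨rfl, hB2⟩
    · intro q hq q' hq' heq
      rw [Finset.mem_coe] at hq hq'
      simp only at heq
      rcases dm_char hAB hu hq with ⟨h2, h1A, -, -⟩ | ⟨h1, hB2, -, -⟩ <;>
        rcases dm_char hAB hu hq' with ⟨h2', h1A', -, -⟩ | ⟨h1', hB2', -, -⟩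
      · rw [if_pos h2, if_pos h2'] at heq
        have := (Prod.mk.injEq _ _ _ _).mp heq
        exact Prod.ext this.1 (h2.trans h2'.symm)
      · have hq2A' : q'.2 ≠ A := ne_of_gt (hAB.trans hB2')
        rw [if_pos h2, if_neg hq2A'] at heq
        have := (Prod.mk.injEq _ _ _ _).mp heq
        exact absurd (this.1 ▸ h1A) (lt_irrefl A)
      · have hq2A : q.2 ≠ A := ne_of_gt (hAB.trans hB2)
        rw [if_neg hq2A, if_pos h2'] at heq
        have := (Prod.mk.injEq _ _ _ _).mp heq
        exact absurd (this.1 ▸ h1A') (lt_irrefl A)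
      · have hq2A : q.2 ≠ A := ne_of_gt (hAB.trans hB2)
        have hq2A' : q'.2 ≠ A := ne_of_gt (hAB.trans hB2')
        rw [if_neg hq2A, if_neg hq2A'] at heq
        have := (Prod.mk.injEq _ _ _ _).mp heq
        exact Prod.ext (h1.trans h1'.symm) this.2
  have hsplit : (Dp \ S).card + S.card = Dp.card := Finset.card_sdiff_add_card_eq_card hSsub
  rw [len_eq_card, len_eq_card]
  omega

lemma swap_fst {N : ℕ} (u : Equiv.Perm (Fin N)) (A B : Fin N) :
    (u * Equiv.swap A B) A = u B := by simp [Equiv.Perm.mul_apply]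

lemma swap_snd {N : ℕ} (u : Equiv.Perm (Fin N)) (A B : Fin N) :
    (u * Equiv.swap A B) B = u A := by simp [Equiv.Perm.mul_apply]

lemma len_lt_swap {N : ℕ} (u : Equiv.Perm (Fin N)) {A B : Fin N} (hAB : A < B)
    (hu : u A < u B) : len u < len (u * Equiv.swap A B) := by
  have := card_bound u hAB hu {(A, B)} ?_ ?_ ?_
  · simpa using this
  · intro q hq
    rw [Finset.mem_singleton] at hq
    subst hq
    rw [Finset.mem_sdiff, mem_invSet, mem_invSet]
    refine ⟨⟨hAB, ?_⟩, ?_⟩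
    · show (u * Equiv.swap A B) B < (u * Equiv.swap A B) A
      rw [swap_fst, swap_snd]; exact hu
    · rintro ⟨-, h⟩; exact absurd hu (not_lt_of_gt h)
  · intro q hq; rw [Finset.mem_singleton] at hq; subst hq
    rintro ⟨h, -⟩; exact absurd h (lt_irrefl A)
  · intro q hq; rw [Finset.mem_singleton] at hq; subst hq
    rintro ⟨-, h⟩; exact absurd h (lt_irrefl B)

lemma len_middle {N : ℕ} (u : Equiv.Perm (Fin N)) {A C B : Fin N} (hAC : A < C)
    (hCB : C < B) (h1 : u A < u C) (h2 : u C < u B) :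
    len u + 3 ≤ len (u * Equiv.swap A B) := by
  have hAB : A < B := hAC.trans hCB
  have hu : u A < u B := h1.trans h2
  have hCA : C ≠ A := ne_of_gt hAC
  have hCB' : C ≠ B := ne_of_lt hCB
  have hvC : (u * Equiv.swap A B) C = u C := by
    simp [Equiv.Perm.mul_apply, Equiv.swap_apply_of_ne_of_ne hCA hCB']
  have hcard : ({(A, B), (A, C), (C, B)} : Finset (Fin N × Fin N)).card = 3 := by
    rw [Finset.card_insert_of_notMem, Finset.card_insert_of_notMem, Finset.card_singleton]
    · simp only [Finset.mem_singleton]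
      intro h
      exact hCA ((Prod.mk.injEq _ _ _ _).mp h).1.symm
    · simp only [Finset.mem_insert, Finset.mem_singleton]
      rintro (h | h)
      · exact hCB' ((Prod.mk.injEq _ _ _ _).mp h).2.symm
      · exact hCA (((Prod.mk.injEq _ _ _ _).mp h).1).symm
  have := card_bound u hAB hu {(A, B), (A, C), (C, B)} ?_ ?_ ?_
  · rw [hcard] at this; exact this
  · intro q hq
    simp only [Finset.mem_insert, Finset.mem_singleton] at hq
    rcases hq with rfl | rfl | rfl <;>
      rw [Finset.mem_sdiff, mem_invSet, mem_invSet]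
    · refine ⟨⟨hAB, ?_⟩, ?_⟩
      · show (u * Equiv.swap A B) B < (u * Equiv.swap A B) A
        rw [swap_fst, swap_snd]; exact hu
      · rintro ⟨-, h⟩; exact absurd hu (not_lt_of_gt h)
    · refine ⟨⟨hAC, ?_⟩, ?_⟩
      · show (u * Equiv.swap A B) C < (u * Equiv.swap A B) A
        rw [swap_fst, hvC]; exact h2
      · rintro ⟨-, h⟩; exact absurd h1 (not_lt_of_gt h)
    · refine ⟨⟨hCB, ?_⟩, ?_⟩
      · show (u * Equiv.swap A B) B < (u * Equiv.swap A B) C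
        rw [swap_snd, hvC]; exact h1
      · rintro ⟨-, h⟩; exact absurd h2 (not_lt_of_gt h)
  · intro q hq
    simp only [Finset.mem_insert, Finset.mem_singleton] at hq
    rcases hq with rfl | rfl | rfl
    · rintro ⟨h, -⟩; exact absurd h (lt_irrefl A)
    · rintro ⟨h, -⟩; exact absurd h (lt_irrefl A)
    · rintro ⟨h, -⟩; exact absurd (hAC.trans h) (lt_irrefl A)
  · intro q hq
    simp only [Finset.mem_insert, Finset.mem_singleton] at hq
    rcases hq with rfl | rfl | rfl
    · rintro ⟨-, h⟩; exact absurd h (lt_irrefl B)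
    · rintro ⟨-, h⟩; exact absurd (h.trans hCB) (lt_irrefl B)
    · rintro ⟨h, -⟩; exact hCA h

lemma cover_ulb {N : ℕ} {u : Equiv.Perm (Fin N)} {A B : Fin N}
    (h : len (u * Equiv.swap A B) = len u + 1) (hAB : A < B) : u A < u B := by
  by_contra h'
  have hne : u A ≠ u B := (Equiv.injective u).ne (ne_of_lt hAB)
  have hBA : u B < u A := lt_of_le_of_ne (not_lt.mp h') hne.symm
  set v := u * Equiv.swap A B with hv
  have hvAB : v A < v B := by rw [hv, swap_fst, swap_snd]; exact hBA
  have hvu : v * Equiv.swap A B = u := by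
    rw [hv, mul_assoc, Equiv.swap_mul_self, mul_one]
  have := len_lt_swap v hAB hvAB
  rw [hvu] at this
  omega

lemma cover_nomiddle {N : ℕ} {u : Equiv.Perm (Fin N)} {A B : Fin N}
    (h : len (u * Equiv.swap A B) = len u + 1) {C : Fin N} (hAC : A < C) (hCB : C < B)
    (h1 : u A < u C) (h2 : u C < u B) : False := by
  have := len_middle u hAC hCB h1 h2
  omega



noncomputable def invPset {N : ℕ} (u : Equiv.Perm (Fin N)) (P : Fin N) : Finset (Fin N) :=
  Finset.univ.filter fun i => (i < P ∧ u P < u i) ∨ (P < i ∧ u i < u P)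

lemma touch_card {N : ℕ} (u : Equiv.Perm (Fin N)) (P : Fin N) :
    ((invSet u).filter fun q => q.1 = P ∨ q.2 = P).card = (invPset u P).card := by
  apply Finset.card_bij (fun q _ => if q.1 = P then q.2 else q.1)
  · intro q hq
    rw [Finset.mem_filter, mem_invSet] at hq
    obtain ⟨⟨h12, hval⟩, hP⟩ := hq
    rw [invPset, Finset.mem_filter]
    refine ⟨Finset.mem_univ _, ?_⟩
    by_cases h1 : q.1 = P
    · rw [if_pos h1]
      exact Or.inr ⟨h1 ▸ h12, h1 ▸ hval⟩
    · have h2 : q.2 = P := hP.resolve_left h1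
      rw [if_neg h1]
      exact Or.inl ⟨h2 ▸ h12, h2 ▸ hval⟩
  · intro q hq q' hq' heq
    rw [Finset.mem_filter, mem_invSet] at hq hq'
    obtain ⟨⟨h12, -⟩, hP⟩ := hq
    obtain ⟨⟨h12', -⟩, hP'⟩ := hq'
    by_cases h1 : q.1 = P <;> by_cases h1' : q'.1 = P
    · rw [if_pos h1, if_pos h1'] at heq
      exact Prod.ext (h1.trans h1'.symm) heq
    · rw [if_pos h1, if_neg h1'] at heq
      have h2' : q'.2 = P := hP'.resolve_left h1'
      exact absurd ((h1 ▸ h12).trans (heq ▸ h2' ▸ h12')) (lt_irrefl P)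
    · rw [if_neg h1, if_pos h1'] at heq
      have h2 : q.2 = P := hP.resolve_left h1
      exact absurd ((h1' ▸ h12').trans (heq ▸ h2 ▸ h12)) (lt_irrefl P)
    · rw [if_neg h1, if_neg h1'] at heq
      have h2 : q.2 = P := hP.resolve_left h1
      have h2' : q'.2 = P := hP'.resolve_left h1'
      exact Prod.ext heq (h2.trans h2'.symm)
  · intro i hi
    rw [invPset, Finset.mem_filter] at hi
    rcases hi.2 with ⟨hiP, hv⟩ | ⟨hPi, hv⟩
    · refine ⟨(i, P), ?_, ?_⟩
      · rw [Finset.mem_filter, mem_invSet]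
        exact ⟨⟨hiP, hv⟩, Or.inr rfl⟩
      · rw [if_neg (ne_of_lt hiP)]
    · refine ⟨(P, i), ?_, ?_⟩
      · rw [Finset.mem_filter, mem_invSet]
        exact ⟨⟨hPi, hv⟩, Or.inl rfl⟩
      · rw [if_pos rfl]

lemma notouch_card {N : ℕ} (u : Equiv.Perm (Fin (N + 1))) (P : Fin (N + 1)) :
    ((invSet u).filter fun q => ¬(q.1 = P ∨ q.2 = P)).card = len (drop u P) := by
  rw [len_eq_card]
  symm
  apply Finset.card_bij (fun q _ => (P.succAbove q.1, P.succAbove q.2))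
  · intro q hq
    rw [mem_invSet] at hq
    rw [Finset.mem_filter, mem_invSet]
    refine ⟨⟨?_, ?_⟩, ?_⟩
    · exact Fin.succAbove_lt_succAbove_iff.mpr hq.1
    · show u (P.succAbove q.2) < u (P.succAbove q.1)
      rw [← succAbove_drop, ← succAbove_drop]
      exact Fin.succAbove_lt_succAbove_iff.mpr hq.2
    · rintro (h | h)
      · exact P.succAbove_ne q.1 h
      · exact P.succAbove_ne q.2 h
  · intro q hq q' hq' heq
    have h1 := (Prod.mk.injEq _ _ _ _).mp heq
    exact Prod.ext (P.succAbove_right_injective h1.1) (P.succAbove_right_injective h1.2)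
  · intro q hq
    rw [Finset.mem_filter, mem_invSet] at hq
    obtain ⟨⟨h12, hval⟩, hP⟩ := hq
    push_neg at hP
    obtain ⟨i, hi⟩ := Fin.exists_succAbove_eq hP.1
    obtain ⟨j, hj⟩ := Fin.exists_succAbove_eq hP.2
    refine ⟨(i, j), ?_, ?_⟩
    · rw [mem_invSet]
      constructor
      · exact Fin.succAbove_lt_succAbove_iff.mp (by rw [hi, hj]; exact h12)
      · apply Fin.succAbove_lt_succAbove_iff (p := u P).mp
        rw [succAbove_drop, succAbove_drop, hi, hj]
        exact hval
    · simp only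
      rw [hi, hj]

lemma len_drop_add {N : ℕ} (u : Equiv.Perm (Fin (N + 1))) (P : Fin (N + 1)) :
    len u = len (drop u P) + (invPset u P).card := by
  have h := Finset.card_filter_add_card_filter_not
    (s := invSet u) (p := fun q => q.1 = P ∨ q.2 = P)
  rw [len_eq_card, ← h, touch_card, notouch_card]
  omega



lemma invP_swap {N : ℕ} (u : Equiv.Perm (Fin N)) {A B P : Fin N} (hAB : A < B)
    (hu : u A < u B) (hPA : P ≠ A) (hPB : P ≠ B)
    (hnm : ¬(A < P ∧ P < B ∧ u A < u P ∧ u P < u B)) :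
    (invPset (u * Equiv.swap A B) P).card = (invPset u P).card := by
  set u' := u * Equiv.swap A B with hu'
  have hP' : u' P = u P := by
    simp [hu', Equiv.Perm.mul_apply, Equiv.swap_apply_of_ne_of_ne hPA hPB]
  have hA' : u' A = u B := swap_fst u A B
  have hB' : u' B = u A := swap_snd u A B
  have hABne : A ≠ B := ne_of_lt hAB
  rw [invPset, invPset, Finset.card_filter, Finset.card_filter]
  rw [← Finset.sum_erase_add _ _ (Finset.mem_univ B),
      ← Finset.sum_erase_add _ _ (Finset.mem_erase.mpr ⟨hABne, Finset.mem_univ A⟩)]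
  conv_rhs => rw [← Finset.sum_erase_add _ _ (Finset.mem_univ B),
      ← Finset.sum_erase_add _ _ (Finset.mem_erase.mpr ⟨hABne, Finset.mem_univ A⟩)]
  have hsum : ∀ i ∈ (Finset.univ.erase B).erase A,
      (if (i < P ∧ u' P < u' i) ∨ (P < i ∧ u' i < u' P) then 1 else 0) =
      (if (i < P ∧ u P < u i) ∨ (P < i ∧ u i < u P) then (1:ℕ) else 0) := by
    intro i hi
    rw [Finset.mem_erase, Finset.mem_erase] at hi
    have hiv : u' i = u i := by
      simp [hu', Equiv.Perm.mul_apply, Equiv.swap_apply_of_ne_of_ne hi.1 hi.2.1]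
    rw [hP', hiv]
  rw [Finset.sum_congr rfl hsum]
  have hva : (u P : ℕ) ≠ (u A : ℕ) := fun h => (u.injective.ne hPA) (Fin.ext h)
  have hvb : (u P : ℕ) ≠ (u B : ℕ) := fun h => (u.injective.ne hPB) (Fin.ext h)
  have hpa : (P : ℕ) ≠ (A : ℕ) := fun h => hPA (Fin.ext h)
  have hpb : (P : ℕ) ≠ (B : ℕ) := fun h => hPB (Fin.ext h)
  simp only [hP', hA', hB', Fin.lt_def] at hnm hAB hu ⊢
  split_ifs <;> omega

lemma drop_mul_swap {N : ℕ} (u : Equiv.Perm (Fin (N + 1))) {P A B : Fin (N + 1)}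
    (hA : A ≠ P) (hB : B ≠ P) {A' B' : Fin N}
    (hA' : P.succAbove A' = A) (hB' : P.succAbove B' = B) :
    drop (u * Equiv.swap A B) P = drop u P * Equiv.swap A' B' := by
  have hP : (u * Equiv.swap A B) P = u P := by
    simp [Equiv.Perm.mul_apply, Equiv.swap_apply_of_ne_of_ne hA.symm hB.symm]
  apply Equiv.ext
  intro j
  have key : Equiv.swap A B (P.succAbove j) = P.succAbove (Equiv.swap A' B' j) := by
    by_cases hj : j = A'
    · subst hj; rw [hA', Equiv.swap_apply_left, Equiv.swap_apply_left, hB']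
    · by_cases hj' : j = B'
      · subst hj'; rw [hB', Equiv.swap_apply_right, Equiv.swap_apply_right, hA']
      · have h1 : P.succAbove j ≠ A := by
          rw [← hA']; exact fun h => hj (P.succAbove_right_injective h)
        have h2 : P.succAbove j ≠ B := by
          rw [← hB']; exact fun h => hj' (P.succAbove_right_injective h)
        rw [Equiv.swap_apply_of_ne_of_ne h1 h2, Equiv.swap_apply_of_ne_of_ne hj hj']
  rw [Equiv.Perm.mul_apply]
  apply Fin.succAbove_right_injective (p := (u P))
  have h1 := succAbove_drop (u * Equiv.swap A B) P j
  rw [hP] at h1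
  have h2 := succAbove_drop u P (Equiv.swap A' B' j)
  rw [h1, h2, Equiv.Perm.mul_apply, key]



lemma pos_val {N : ℕ} [NeZero N] {j : ℕ} (hj : j ≤ N) : (pos N j : ℕ) = j - 1 := by
  have hN := Nat.pos_of_ne_zero (NeZero.ne N)
  simp only [pos]
  exact Nat.mod_eq_of_lt (by omega)

lemma cover_main (n k p : ℕ) (u u' : Equiv.Perm (Fin (n + 2)))
    (hc : kCover (n + 2) k u u') (hkp : k < p) (hpn : p ≤ n + 2) :
    val u' p ≤ val u p ∧
    (val u' p = val u p →
      len (drop u' (pos (n + 2) p)) = len (drop u (pos (n + 2) p)) + 1 ∧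
      kCover (n + 1) k (drop u (pos (n + 2) p)) (drop u' (pos (n + 2) p))) := by
  obtain ⟨a, b, ha1, hak, hkb, hbN, hw', hlen⟩ := hc
  set P := pos (n + 2) p with hP
  set A := pos (n + 2) a with hA
  set B := pos (n + 2) b with hB
  have hPv : (P : ℕ) = p - 1 := pos_val hpn
  have hAv : (A : ℕ) = a - 1 := pos_val (by omega)
  have hBv : (B : ℕ) = b - 1 := pos_val hbN
  have hk1 : 1 ≤ k := le_trans ha1 hak
  have hAB : A < B := by rw [Fin.lt_def, hAv, hBv]; omega
  have hAP : A < P := by rw [Fin.lt_def, hAv, hPv]; omega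
  have ht : t (n + 2) a b = Equiv.swap A B := rfl
  rw [ht] at hw'
  subst hw'
  have huAB : u A < u B := cover_ulb hlen hAB
  have hval' : val (u * Equiv.swap A B) p = ((u * Equiv.swap A B) P : ℕ) + 1 := rfl
  have hvalu : val u p = (u P : ℕ) + 1 := rfl
  by_cases hPB : P = B
  · have hswP : (u * Equiv.swap A B) P = u A := by rw [hPB]; exact swap_snd u A B
    have hlt : (u A : ℕ) < (u B : ℕ) := huAB
    constructor
    · rw [hval', hvalu, hswP, hPB]; omega
    · intro heq
      rw [hval', hvalu, hswP, hPB] at heq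
      omega
  · have hswP : (u * Equiv.swap A B) P = u P := by
      rw [Equiv.Perm.mul_apply, Equiv.swap_apply_of_ne_of_ne (ne_of_gt hAP) hPB]
    have hvv : val (u * Equiv.swap A B) p = val u p := by rw [hval', hvalu, hswP]
    refine ⟨le_of_eq hvv, fun _ => ?_⟩
    have hnm : ¬(A < P ∧ P < B ∧ u A < u P ∧ u P < u B) := by
      rintro ⟨h1, h2, h3, h4⟩
      exact cover_nomiddle hlen h1 h2 h3 h4
    have hinv := invP_swap u hAB huAB (ne_of_gt hAP) hPB hnm
    have hld1 := len_drop_add u P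
    have hld2 := len_drop_add (u * Equiv.swap A B) P
    have hlen2 : len (drop (u * Equiv.swap A B) P) = len (drop u P) + 1 := by omega
    refine ⟨hlen2, ?_⟩
    have hbp : b ≠ p := by
      intro h
      exact hPB (Fin.ext (by rw [hPv, hBv, h]))
    set b' := if b < p then b else b - 1 with hb'
    have hb'b : k < b' ∧ b' ≤ n + 1 ∧ b' ≤ n + 2 ∧ 1 ≤ b' := by
      rw [hb']; split_ifs <;> omega
    have hA'v : (pos (n + 1) a : ℕ) = a - 1 := pos_val (by omega)
    have hB'v : (pos (n + 1) b' : ℕ) = b' - 1 := pos_val hb'b.2.1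
    have hsA : P.succAbove (pos (n + 1) a) = A := by
      rw [Fin.succAbove_of_castSucc_lt]
      · exact Fin.ext (by rw [Fin.coe_castSucc, hA'v, hAv])
      · rw [Fin.lt_def, Fin.coe_castSucc, hA'v, hPv]; omega
    have hsB : P.succAbove (pos (n + 1) b') = B := by
      by_cases hblt : b < p
      · have hb'eq : b' = b := by rw [hb', if_pos hblt]
        rw [Fin.succAbove_of_castSucc_lt]
        · exact Fin.ext (by rw [Fin.coe_castSucc, hB'v, hBv, hb'eq])
        · rw [Fin.lt_def, Fin.coe_castSucc, hB'v, hPv, hb'eq]; omega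
      · have hb'eq : b' = b - 1 := by rw [hb', if_neg hblt]
        have hbgt : p < b := by omega
        rw [Fin.succAbove_of_le_castSucc]
        · exact Fin.ext (by rw [Fin.val_succ, hB'v, hBv, hb'eq]; omega)
        · rw [Fin.le_def, Fin.coe_castSucc, hB'v, hPv, hb'eq]; omega
    refine ⟨a, b', ha1, hak, hb'b.1, hb'b.2.1, ?_, ?_⟩
    · exact drop_mul_swap u (ne_of_lt hAP) (fun h => hPB h.symm) hsA hsB
    · exact hlen2



lemma kBruhat_val_le {n k p : ℕ} (hkp : k < p) (hpn : p ≤ n + 2)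
    {w w' : Equiv.Perm (Fin (n + 2))} (h : kBruhat (n + 2) k w w') :
    val w' p ≤ val w p := by
  have h' : Relation.TransGen (kCover (n + 2) k) w w' := h
  induction h' with
  | single hc => exact (cover_main n k p _ _ hc hkp hpn).1
  | tail hwb hc ih => exact le_trans (cover_main n k p _ _ hc hkp hpn).1 (ih hwb)


/-- If `w <ₖ w'` and `p > k` with `w(p) = w'(p)`, then
`ℓ(w'|ₚ) - ℓ(w|ₚ) = ℓ(w') - ℓ(w)` and `w|ₚ <ₖ w'|ₚ` (here the paper's `n` is `n+2`). -/
theorem drop_length_and_kBruhat (n k p : ℕ) (w w' : Equiv.Perm (Fin (n + 2)))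
    (hbru : kBruhat (n + 2) k w w') (hkp : k < p) (hpn : p ≤ n + 2)
    (hfix : val w p = val w' p) :
    ((len (drop w' (pos (n + 2) p)) : ℤ) - len (drop w (pos (n + 2) p)) =
      (len w' : ℤ) - len w) ∧
    kBruhat (n + 1) k (drop w (pos (n + 2) p)) (drop w' (pos (n + 2) p)) := by

  have main : ∀ w'' : Equiv.Perm (Fin (n + 2)),
      Relation.TransGen (kCover (n + 2) k) w w'' → val w p = val w'' p →
      ((len (drop w'' (pos (n + 2) p)) : ℤ) - len (drop w (pos (n + 2) p)) =
        (len w'' : ℤ) - len w) ∧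
      kBruhat (n + 1) k (drop w (pos (n + 2) p)) (drop w'' (pos (n + 2) p)) := by
    intro w'' h
    induction h with
    | single hc =>
      intro hfx
      obtain ⟨hlen, hcov⟩ := (cover_main n k p _ _ hc hkp hpn).2 hfx.symm
      obtain ⟨a, b, -, -, -, -, -, hL⟩ := hc
      exact ⟨by omega, Relation.TransGen.single hcov⟩
    | @tail v c hwb hcov ih =>
      intro hfx
      have h1 : val v p ≤ val w p := kBruhat_val_le hkp hpn hwb
      have h2 : val c p ≤ val v p := (cover_main n k p _ _ hcov hkp hpn).1
      have hfb : val w p = val v p := by omega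
      obtain ⟨ihlen, ihbru⟩ := ih hfb
      obtain ⟨hlen, hcov'⟩ := (cover_main n k p _ _ hcov hkp hpn).2 (by omega)
      obtain ⟨a, b, -, -, -, -, -, hL⟩ := hcov
      refine ⟨?_, Relation.TransGen.tail ihbru hcov'⟩
      omega
  exact main w' hbru hfix


end SchubertPieri
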